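/- arXiv:2509.22284 — 3 statements merged into one kernel-verified Lean document; each statement's English description precedes it below -/
import Mathlib

section
/- (System stability under PD parametrization.) Let ε ∈ (0,1] and B ≥ 0. Let (A_t)_{t≥1} be a sequence of matrices in H^{N×N} with ‖A_t‖_max ≤ 1 − ε for all t, let (b_t)_{t≥1} be vectors in ℂ^N with ‖b_t‖₂ ≤ B for all t, and let x_0 ∈ ℂ^N with ‖x_0‖₂ ≤ B. Define the state sequence by the recurrence x_t = A_t x_{t−1} + b_t. Then for every t ≥ 0, ‖x_t‖₂ ≤ √N · B / ε. -/
/-- The max-entry norm of a complex matrix: the maximum of the absolute values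
of its entries (zero for the empty matrix). -/
noncomputable def maxNorm {N : ℕ} (A : Matrix (Fin N) (Fin N) ℂ) : ℝ :=
  ((Finset.univ.sup fun p : Fin N × Fin N => ‖A p.1 p.2‖₊ : NNReal) : ℝ)

/-- The Euclidean (ℓ²) norm on `ℂ^N`. -/
noncomputable def euclNorm {N : ℕ} (x : Fin N → ℂ) : ℝ :=
  Real.sqrt (∑ i, ‖x i‖ ^ 2)

lemma eucl_le_l1 {N : ℕ} (x : Fin N → ℂ) : euclNorm x ≤ ∑ i, ‖x i‖ := by
  have h : ∑ i, ‖x i‖ ^ 2 ≤ (∑ i, ‖x i‖) ^ 2 :=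
    Finset.sum_sq_le_sq_sum_of_nonneg (fun i _ => norm_nonneg _)
  calc euclNorm x ≤ Real.sqrt ((∑ i, ‖x i‖) ^ 2) := Real.sqrt_le_sqrt h
    _ = ∑ i, ‖x i‖ := Real.sqrt_sq (Finset.sum_nonneg fun i _ => norm_nonneg _)

lemma l1_le_sqrt_eucl {N : ℕ} (x : Fin N → ℂ) :
    ∑ i, ‖x i‖ ≤ Real.sqrt N * euclNorm x := by
  have h := Finset.sum_mul_sq_le_sq_mul_sq Finset.univ (fun _ : Fin N => (1 : ℝ))
    (fun i => ‖x i‖)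
  simp only [one_mul, one_pow, Finset.sum_const, Finset.card_univ, Fintype.card_fin,
    nsmul_eq_mul, mul_one] at h
  have h1 : (0 : ℝ) ≤ ∑ i, ‖x i‖ := Finset.sum_nonneg fun i _ => norm_nonneg _
  have := Real.sqrt_le_sqrt h
  rwa [Real.sqrt_sq h1, Real.sqrt_mul (Nat.cast_nonneg N), ← euclNorm] at this

lemma l1_mulVec_le {N : ℕ} (M : Matrix (Fin N) (Fin N) ℂ) (c : ℝ) (hc : 0 ≤ c)
    (hH : ∀ j : Fin N, ∃! i : Fin N, M i j ≠ 0)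
    (hM : maxNorm M ≤ c) (x : Fin N → ℂ) :
    ∑ i, ‖M.mulVec x i‖ ≤ c * ∑ j, ‖x j‖ := by
  have hcol : ∀ j : Fin N, ∑ i, ‖M i j‖ ≤ c := by
    intro j
    obtain ⟨i₀, hi₀, huniq⟩ := hH j
    have hz : ∀ i ∈ Finset.univ, i ≠ i₀ → ‖M i j‖ = 0 := by
      intro i _ hne
      by_contra h
      exact hne (huniq i (by simpa [norm_eq_zero] using h))
    rw [Finset.sum_eq_single i₀ hz (by simp)]
    refine le_trans ?_ hM
    have h := Finset.le_sup (f := fun p : Fin N × Fin N => ‖M p.1 p.2‖₊)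
      (Finset.mem_univ (i₀, j))
    rw [← coe_nnnorm]
    exact NNReal.coe_le_coe.mpr h
  calc ∑ i, ‖M.mulVec x i‖ = ∑ i, ‖∑ j, M i j * x j‖ := by
        simp only [Matrix.mulVec, dotProduct]
    _ ≤ ∑ i, ∑ j, ‖M i j * x j‖ :=
        Finset.sum_le_sum fun i _ => norm_sum_le _ _
    _ = ∑ j, (∑ i, ‖M i j‖) * ‖x j‖ := by
        rw [Finset.sum_comm]
        simp [norm_mul, Finset.sum_mul]
    _ ≤ ∑ j, c * ‖x j‖ := by
        apply Finset.sum_le_sum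
        intro j _
        exact mul_le_mul_of_nonneg_right (hcol j) (norm_nonneg _)
    _ = c * ∑ j, ‖x j‖ := by rw [Finset.mul_sum]

/-- System stability under the PD parametrization.  Let `ε ∈ (0,1]`, `B ≥ 0`,
let `A t` (for `t ≥ 1`) be matrices in `H^{N×N}` (every column has exactly one
nonzero entry) with max-entry norm at most `1 - ε`, let `b t` (for `t ≥ 1`)
have Euclidean norm at most `B`, and let `‖x 0‖₂ ≤ B`.  If the state evolves by
`x (t+1) = A (t+1) * x t + b (t+1)`, then `‖x t‖₂ ≤ √N * B / ε` for all `t`. -/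
theorem pd_ssm_bibo_stable (N : ℕ) (ε B : ℝ) (hε : ε ∈ Set.Ioc (0 : ℝ) 1)
    (hB : 0 ≤ B)
    (A : ℕ → Matrix (Fin N) (Fin N) ℂ) (b : ℕ → Fin N → ℂ) (x : ℕ → Fin N → ℂ)
    (hH : ∀ t : ℕ, 1 ≤ t → ∀ j : Fin N, ∃! i : Fin N, A t i j ≠ 0)
    (hA : ∀ t : ℕ, 1 ≤ t → maxNorm (A t) ≤ 1 - ε)
    (hb : ∀ t : ℕ, 1 ≤ t → euclNorm (b t) ≤ B)
    (hx0 : euclNorm (x 0) ≤ B)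
    (hrec : ∀ t : ℕ, x (t + 1) = (A (t + 1)).mulVec (x t) + b (t + 1)) :
    ∀ t : ℕ, euclNorm (x t) ≤ Real.sqrt N * B / ε := by
  obtain ⟨hε0, hε1⟩ := hε
  have hNB : (0:ℝ) ≤ Real.sqrt N * B := mul_nonneg (Real.sqrt_nonneg _) hB
  have key : ∀ t : ℕ, ∑ i, ‖x t i‖ ≤ Real.sqrt N * B / ε := by
    intro t
    induction t with
    | zero =>
      calc ∑ i, ‖x 0 i‖ ≤ Real.sqrt N * euclNorm (x 0) := l1_le_sqrt_eucl _
        _ ≤ Real.sqrt N * B := mul_le_mul_of_nonneg_left hx0 (Real.sqrt_nonneg _)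
        _ ≤ Real.sqrt N * B / ε := by
            rw [le_div_iff₀ hε0]
            nlinarith
    | succ t ih =>
      have hb' : ∑ i, ‖b (t+1) i‖ ≤ Real.sqrt N * B := by
        calc ∑ i, ‖b (t+1) i‖ ≤ Real.sqrt N * euclNorm (b (t+1)) := l1_le_sqrt_eucl _
          _ ≤ Real.sqrt N * B :=
            mul_le_mul_of_nonneg_left (hb (t+1) (by omega)) (Real.sqrt_nonneg _)
      have hmul := l1_mulVec_le (A (t+1)) (1 - ε) (by linarith)
        (hH (t+1) (by omega)) (hA (t+1) (by omega)) (x t)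
      calc ∑ i, ‖x (t+1) i‖ = ∑ i, ‖(A (t+1)).mulVec (x t) i + b (t+1) i‖ := by
            rw [hrec t]; rfl
        _ ≤ ∑ i, (‖(A (t+1)).mulVec (x t) i‖ + ‖b (t+1) i‖) :=
            Finset.sum_le_sum fun i _ => norm_add_le _ _
        _ = (∑ i, ‖(A (t+1)).mulVec (x t) i‖) + ∑ i, ‖b (t+1) i‖ :=
            Finset.sum_add_distrib
        _ ≤ (1 - ε) * (∑ j, ‖x t j‖) + Real.sqrt N * B := add_le_add hmul hb'
        _ ≤ (1 - ε) * (Real.sqrt N * B / ε) + Real.sqrt N * B := by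
            have : (0:ℝ) ≤ 1 - ε := by linarith
            nlinarith
        _ = Real.sqrt N * B / ε := by field_simp; ring
  intro t
  exact le_trans (eucl_le_l1 _) (key t)
end

section
/- (Optimality of PD parametrization.) Let N ≥ 3. Consider the finite-state automaton on states Fin N with input alphabet Fin N whose transition under input c is f_c(i) = i + 1 (mod N) if i = c and f_c(i) = i otherwise. Then for every d ≤ N − 2 there do not exist an injective map v : Fin N → ℝ^d, matrices A_c ∈ ℝ^{d×d}, and vectors b_c ∈ ℝ^d (one pair for each c ∈ Fin N) such that A_c v_i + b_c = v_{f_c(i)} for all i, c ∈ Fin N. In other words, this N-state automaton cannot be emulated by any single-layer real state-space model with state size at most N − 2 under unique (injective) state encodings. -/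
/-- Optimality of the PD parametrization.  For `N ≥ 3`, consider the FSA on
states `Fin N` with input alphabet `Fin N` whose transition under input `c`
maps `i` to `i + 1 (mod N)` if `i = c` and fixes `i` otherwise.  Then for any
`d ≤ N - 2`, there is no injective state encoding `v : Fin N → ℝ^d` together
with matrices `A c` and vectors `b c` such that the affine update
`x ↦ A c * x + b c` maps each state encoding to the encoding of its successor.
That is, this `N`-state automaton cannot be emulated by a single-layer real SSM
with state size at most `N - 2` under unique state encodings. -/
theorem pd_parametrization_optimal (N : ℕ) [NeZero N] (hN : 3 ≤ N)
    (d : ℕ) (hd : d ≤ N - 2) :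
    ¬ ∃ (v : Fin N → (Fin d → ℝ)) (A : Fin N → Matrix (Fin d) (Fin d) ℝ)
        (b : Fin N → (Fin d → ℝ)),
      Function.Injective v ∧
      ∀ c i : Fin N,
        (A c).mulVec (v i) + b c = v (if i = c then i + 1 else i) := by
  rintro ⟨v, A, b, hinj, h⟩
  -- the fixed-point set of each affine update is an affine subspace
  set S : Fin N → AffineSubspace ℝ (Fin d → ℝ) := fun c =>
    { carrier := {x | (A c).mulVec x + b c = x}
      smul_vsub_vadd_mem' := by
        intro r p1 p2 p3 h1 h2 h3
        simp only [Set.mem_setOf_eq, vsub_eq_sub, vadd_eq_add] at *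
        have e1 : (A c).mulVec p1 = p1 - b c := eq_sub_of_add_eq h1
        have e2 : (A c).mulVec p2 = p2 - b c := eq_sub_of_add_eq h2
        have e3 : (A c).mulVec p3 = p3 - b c := eq_sub_of_add_eq h3
        rw [Matrix.mulVec_add, Matrix.mulVec_smul, Matrix.mulVec_sub, e1, e2, e3]
        module } with hS
  have hmemS : ∀ (c : Fin N) (x : Fin d → ℝ), x ∈ S c ↔ (A c).mulVec x + b c = x := by
    intro c x; rfl
  -- each v i with i ≠ c is fixed by update c
  have hfix : ∀ c i : Fin N, i ≠ c → v i ∈ S c := by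
    intro c i hic
    rw [hmemS]
    have := h c i
    rwa [if_neg hic] at this
  -- v c is not fixed by update c
  have hone : (1 : Fin N) ≠ 0 := by
    intro hcon
    have h1 : ((1 : Fin N) : ℕ) = 1 % N := Fin.val_one' N
    rw [hcon] at h1
    simp only [Fin.val_zero] at h1
    have : 1 % N = 1 := Nat.mod_eq_of_lt (by omega)
    omega
  have hnot : ∀ c : Fin N, v c ∉ S c := by
    intro c hc
    rw [hmemS] at hc
    have hcc := h c c
    rw [if_pos rfl] at hcc
    have : v (c + 1) = v c := by rw [← hcc, hc]
    have h2 : c + 1 = c := hinj this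
    exact hone (add_eq_left.mp h2)
  -- v is affinely independent
  have hindep : AffineIndependent ℝ v := by
    rw [affineIndependent_iff_of_fintype]
    intro w hw hvsub
    by_contra hcon
    push_neg at hcon
    obtain ⟨j, hj⟩ := hcon
    rw [Finset.weightedVSub_eq_linear_combination _ hw] at hvsub
    -- the affine combination of the other points with weights -w i / w j equals v j
    set p : {i : Fin N // i ≠ j} → (Fin d → ℝ) := fun i => v i.1 with hp
    set w' : {i : Fin N // i ≠ j} → ℝ := fun i => -w i.1 / w j with hw'
    have hsum_ne : ∑ i : {i : Fin N // i ≠ j}, w i.1 = -w j := by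
      have := Finset.sum_subtype (p := fun i => i ≠ j) (F := inferInstance) (f := w) (Finset.univ.erase j)
        (fun x => by simp)
      rw [← this, Finset.sum_erase_eq_sub (Finset.mem_univ j), hw]
      ring
    have hw1 : ∑ i : {i : Fin N // i ≠ j}, w' i = 1 := by
      simp only [hw', div_eq_mul_inv, ← Finset.sum_mul]
      have hneg : ∑ i : {i : Fin N // i ≠ j}, -w i.1 = w j := by
        rw [Finset.sum_neg_distrib, hsum_ne, neg_neg]
      rw [hneg, mul_inv_cancel₀ hj]
    have hcomb : Finset.univ.affineCombination ℝ p w' = v j := by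
      rw [Finset.affineCombination_eq_linear_combination _ _ _ hw1]
      have hsv : ∑ i : {i : Fin N // i ≠ j}, w i.1 • v i.1 = -(w j • v j) := by
        have := Finset.sum_subtype (p := fun i => i ≠ j) (F := inferInstance) (f := fun i => w i • v i)
          (Finset.univ.erase j) (fun x => by simp)
        rw [← this, Finset.sum_erase_eq_sub (Finset.mem_univ j), hvsub]
        exact zero_sub _
      have : ∑ i : {i : Fin N // i ≠ j}, w' i • p i
          = (w j)⁻¹ • ∑ i : {i : Fin N // i ≠ j}, (-w i.1) • v i.1 := by
        rw [Finset.smul_sum]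
        refine Finset.sum_congr rfl fun i _ => ?_
        simp only [hw', hp, div_eq_inv_mul, smul_smul]
      rw [this]
      simp only [neg_smul, Finset.sum_neg_distrib, hsv, neg_neg]
      rw [smul_smul, inv_mul_cancel₀ hj, one_smul]
    have hmem : v j ∈ affineSpan ℝ (Set.range p) := by
      rw [← hcomb]
      exact affineCombination_mem_affineSpan hw1 p
    have hle : affineSpan ℝ (Set.range p) ≤ S j := by
      rw [affineSpan_le]
      rintro x ⟨i, rfl⟩
      exact hfix j i.1 i.2
    exact hnot j (hle hmem)
  -- affine independence bounds the number of points by dimension + 1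
  have hcard := hindep.card_le_finrank_succ
  have hrank : Module.finrank ℝ (vectorSpan ℝ (Set.range v)) ≤ d := by
    calc Module.finrank ℝ (vectorSpan ℝ (Set.range v))
        ≤ Module.finrank ℝ (Fin d → ℝ) := Submodule.finrank_le _
      _ = d := Module.finrank_fin_fun ℝ
  have : (N : ℕ) ≤ d + 1 := by
    simpa using hcard.trans (by omega)
  omega
end

section
/- (Arbitrary precision and readout: injectivity of the scalar encoding.) Let p_t denote the t-th prime number and let k_t = √(p_t). Consider the scalar recurrence x_t = x_{t−1} + u_t·k_t started at any x_0 ∈ ℝ, where u_t ∈ ℚ are rational input encodings, so that after n steps x_n = x_0 + Σ_{t=1}^n u_t √(p_t). Then the map from finitely supported rational sequences to real numbers, (u_t)_t ↦ Σ_t u_t √(p_t), is injective: if u, v : ℕ → ℚ are finitely supported and u ≠ v, then x_0 + Σ_t u_t √(p_t) ≠ x_0 + Σ_t v_t √(p_t). In particular, no two differing finite input sequences produce the same state, so any FSA can be encoded into this scalar-valued SSM under an appropriate lookup table as readout. -/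
noncomputable section SqrtPrime

/-- The subset of `ℝ` obtained from `ℚ` by successively adjoining the square
roots of the naturals in `L`. -/
def genSet : List ℕ → Set ℝ
  | [] => Set.range (Rat.cast : ℚ → ℝ)
  | p :: L => {x | ∃ a ∈ genSet L, ∃ b ∈ genSet L, x = a + b * Real.sqrt p}

lemma genSet_rat_mem : ∀ (L : List ℕ) (q : ℚ), (q : ℝ) ∈ genSet L
  | [], q => ⟨q, rfl⟩
  | p :: L, q => ⟨q, genSet_rat_mem L q, 0, by simpa using genSet_rat_mem L 0, by ring⟩

lemma genSet_mono {L : List ℕ} {p : ℕ} {a : ℝ} (ha : a ∈ genSet L) :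
    a ∈ genSet (p :: L) :=
  ⟨a, ha, 0, by simpa using genSet_rat_mem L 0, by ring⟩

lemma genSet_sqrt_mem : ∀ {L : List ℕ} {q : ℕ}, q ∈ L → Real.sqrt q ∈ genSet L
  | p :: L, q, hq => by
    rcases List.mem_cons.mp hq with h | h
    · subst h
      exact ⟨0, by simpa using genSet_rat_mem L 0, 1, by simpa using genSet_rat_mem L 1, by ring⟩
    · exact genSet_mono (genSet_sqrt_mem h)

/-- Closure properties of a subset of `ℝ`. -/
def RatClosed (S : Set ℝ) : Prop :=
  (∀ a ∈ S, ∀ b ∈ S, a + b ∈ S) ∧ (∀ a ∈ S, ∀ b ∈ S, a * b ∈ S) ∧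
    (∀ a ∈ S, -a ∈ S) ∧ (∀ a ∈ S, a⁻¹ ∈ S)

/-- The main induction: `genSet L` is a field, and the square root of any
squarefree number having no prime factor in `L` is not in it. -/
theorem genSet_main : ∀ (L : List ℕ), (∀ p ∈ L, Nat.Prime p) → L.Pairwise (· ≠ ·) →
    RatClosed (genSet L) ∧
      ∀ d : ℕ, Squarefree d → d ≠ 1 → (∀ q ∈ L, ¬ q ∣ d) → Real.sqrt d ∉ genSet L
  | [], _, _ => by
    constructor
    · refine ⟨?_, ?_, ?_, ?_⟩ <;> rintro a ⟨qa, rfl⟩ <;>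
        first
          | (rintro b ⟨qb, rfl⟩)
          | skip
      · exact ⟨qa + qb, by push_cast; ring⟩
      · exact ⟨qa * qb, by push_cast; ring⟩
      · exact ⟨-qa, by push_cast; ring⟩
      · exact ⟨qa⁻¹, by push_cast; ring⟩
    · rintro d hsq hd1 - ⟨q, hq⟩
      have hirr : Irrational (Real.sqrt d) := by
        rw [irrational_sqrt_natCast_iff]
        rintro ⟨r, hr⟩
        have hr1 : r = 1 := Nat.isUnit_iff.mp (hsq r (dvd_of_eq hr.symm))
        rw [hr1] at hr
        exact hd1 (by omega)
      exact hirr ⟨q, hq⟩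
  | p :: L, hprime, hnd => by
    have hp : Nat.Prime p := hprime p List.mem_cons_self
    have hL : ∀ q ∈ L, Nat.Prime q := fun q hq => hprime q (List.mem_cons_of_mem p hq)
    have hndL : L.Pairwise (· ≠ ·) := hnd.of_cons
    have hpne : ∀ q ∈ L, p ≠ q := fun q hq => (List.pairwise_cons.mp hnd).1 q hq
    obtain ⟨⟨hadd, hmul, hneg, hinv⟩, hnm⟩ := genSet_main L hL hndL
    have hps : Real.sqrt p * Real.sqrt p = (p : ℝ) :=
      Real.mul_self_sqrt (Nat.cast_nonneg p)
    have hpS : ((p : ℕ) : ℝ) ∈ genSet L := by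
      have := genSet_rat_mem L (p : ℚ); rwa [Rat.cast_natCast] at this
    -- √p is not in genSet L
    have hsp : Real.sqrt p ∉ genSet L := by
      refine hnm p hp.prime.squarefree hp.one_lt.ne' fun q hq hdvd => ?_
      exact hpne q hq ((Nat.prime_dvd_prime_iff_eq (hL q hq) hp).mp hdvd).symm
    constructor
    · refine ⟨?_, ?_, ?_, ?_⟩
      · rintro x ⟨a, ha, b, hb, rfl⟩ y ⟨c, hc, d, hd, rfl⟩
        exact ⟨a + c, hadd _ ha _ hc, b + d, hadd _ hb _ hd, by ring⟩
      · rintro x ⟨a, ha, b, hb, rfl⟩ y ⟨c, hc, d, hd, rfl⟩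
        refine ⟨a * c + b * d * p, ?_, a * d + b * c, ?_, ?_⟩
        · exact hadd _ (hmul _ ha _ hc) _ (hmul _ (hmul _ hb _ hd) _ hpS)
        · exact hadd _ (hmul _ ha _ hd) _ (hmul _ hb _ hc)
        · linear_combination (b * d) * hps
      · rintro x ⟨a, ha, b, hb, rfl⟩
        exact ⟨-a, hneg _ ha, -b, hneg _ hb, by ring⟩
      · rintro x ⟨a, ha, b, hb, rfl⟩
        by_cases hx : a + b * Real.sqrt p = 0
        · rw [hx, inv_zero]
          exact ⟨0, by simpa using genSet_rat_mem L 0, 0,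
            by simpa using genSet_rat_mem L 0, by ring⟩
        have hD : a * a - b * b * p ≠ 0 := by
          intro hD0
          by_cases hb0 : b = 0
          · apply hx
            have : a * a = 0 := by rw [hb0] at hD0; linarith
            have ha0 : a = 0 := by nlinarith
            rw [ha0, hb0]; ring
          · apply hsp
            have hpval : (p : ℝ) = (a / b) ^ 2 := by field_simp; nlinarith
            have : Real.sqrt p = |a / b| := by
              rw [hpval, Real.sqrt_sq_eq_abs]
            rcases abs_choice (a / b) with h | h
            · rw [this, h, div_eq_mul_inv]; exact hmul _ ha _ (hinv _ hb)
            · rw [this, h, div_eq_mul_inv]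
              exact hneg _ (hmul _ ha _ (hinv _ hb))
        refine ⟨a * (a * a - b * b * p)⁻¹, ?_, -(b * (a * a - b * b * p)⁻¹), ?_, ?_⟩
        · exact hmul _ ha _ (hinv _ (hadd _ (hmul _ ha _ ha) _
            (hneg _ (hmul _ (hmul _ hb _ hb) _ hpS))))
        · exact hneg _ (hmul _ hb _ (hinv _ (hadd _ (hmul _ ha _ ha) _
            (hneg _ (hmul _ (hmul _ hb _ hb) _ hpS)))))
        · refine inv_eq_of_mul_eq_one_right ?_
          have h1 : (a + b * Real.sqrt p) * (a * (a * a - b * b * ↑p)⁻¹ +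
              -(b * (a * a - b * b * ↑p)⁻¹) * Real.sqrt p)
              = (a * a - b * b * ↑p) * (a * a - b * b * ↑p)⁻¹ := by
            linear_combination (-(b * b * (a * a - b * b * (p : ℝ))⁻¹)) * hps
          rw [h1, mul_inv_cancel₀ hD]
    · rintro d hsq hd1 hnd' ⟨a, ha, b, hb, heq⟩
      have hd0 : d ≠ 0 := hsq.ne_zero
      have hpd : ¬ p ∣ d := hnd' p List.mem_cons_self
      have hds : Real.sqrt d * Real.sqrt d = (d : ℝ) :=
        Real.mul_self_sqrt (Nat.cast_nonneg d)
      by_cases hb0 : b = 0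
      · refine hnm d hsq hd1 (fun q hq => hnd' q (List.mem_cons_of_mem p hq)) ?_
        rw [heq, hb0]; simpa using ha
      by_cases ha0 : a = 0
      · -- √(d*p) = b * p ∈ genSet L
        have hco : Nat.Coprime d p := (hp.coprime_iff_not_dvd.mpr hpd).symm
        refine hnm (d * p) ((Nat.squarefree_mul hco).mpr ⟨hsq, hp.prime.squarefree⟩)
            (by
              intro h
              exact hp.one_lt.ne' (Nat.eq_one_of_mul_eq_one_left h))
            (fun q hq hdvd => ?_) ?_
        · rcases (Nat.Prime.dvd_mul (hL q hq)).mp hdvd with h | h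
          · exact hnd' q (List.mem_cons_of_mem p hq) h
          · exact hpne q hq ((Nat.prime_dvd_prime_iff_eq (hL q hq) hp).mp h).symm
        · have : Real.sqrt (↑(d * p)) = b * p := by
            push_cast
            rw [Real.sqrt_mul (Nat.cast_nonneg d), heq, ha0]
            linear_combination b * hps
          rw [this]
          exact hmul _ hb _ hpS
      · -- √p = (d - a² - b²p)/(2ab) ∈ genSet L
        apply hsp
        have hd_eq : (d : ℝ) = a * a + b * b * p + 2 * a * b * Real.sqrt p := by
          calc (d : ℝ) = Real.sqrt d * Real.sqrt d := hds.symm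
          _ = (a + b * Real.sqrt p) * (a + b * Real.sqrt p) := by rw [heq]
          _ = a * a + b * b * p + 2 * a * b * Real.sqrt p := by
              linear_combination (b * b) * hps
        have h2ab : (2 : ℝ) * a * b ≠ 0 := by
          simp [ha0, hb0]
        have : Real.sqrt p = ((d : ℝ) - a * a - b * b * p) * (2 * a * b)⁻¹ := by
          rw [eq_mul_inv_iff_mul_eq₀ h2ab]
          linear_combination (-1 : ℝ) * hd_eq
        rw [this]
        have hdS : ((d : ℕ) : ℝ) ∈ genSet L := by
          have := genSet_rat_mem L (d : ℚ); rwa [Rat.cast_natCast] at this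
        refine hmul _ (hadd _ (hadd _ hdS _ (hneg _ (hmul _ ha _ ha))) _
          (hneg _ (hmul _ (hmul _ hb _ hb) _ hpS))) _ (hinv _ ?_)
        have h2S : ((2 : ℚ) : ℝ) ∈ genSet L := genSet_rat_mem L 2
        have : ((2 : ℚ) : ℝ) = (2 : ℝ) := by norm_num
        rw [this] at h2S
        exact hmul _ (hmul _ h2S _ ha) _ hb

end SqrtPrime

/-- Arbitrary precision and readout: injectivity of the scalar encoding.
Let `p t` be the `t`-th prime (`Nat.nth Nat.Prime t`) and consider the scalar
recurrence `x_t = x_{t-1} + u_t * √(p t)` started at `x₀`, with rational input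
encodings `u_t`, whose final state after processing a finitely supported input
sequence `u` is `x₀ + ∑_t u_t √(p t)`.  Then two differing finitely supported
rational input sequences never produce the same state: the map
`u ↦ ∑_t u_t √(p t)` is injective. -/
theorem sqrt_prime_encoding_injective (x₀ : ℝ) (u v : ℕ →₀ ℚ) (huv : u ≠ v) :
    x₀ + (u.sum fun t q => (q : ℝ) * Real.sqrt (Nat.nth Nat.Prime t)) ≠
      x₀ + (v.sum fun t q => (q : ℝ) * Real.sqrt (Nat.nth Nat.Prime t)) := by
  intro h
  set w : ℕ →₀ ℚ := u - v with hwdef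
  have hw0 : w ≠ 0 := sub_ne_zero.mpr huv
  have hsum : (w.sum fun t q => (q : ℝ) * Real.sqrt (Nat.nth Nat.Prime t)) = 0 := by
    rw [hwdef, Finsupp.sum_sub_index (fun t q1 q2 => by push_cast; ring)]
    have h' := add_left_cancel h
    rw [h']; ring
  have hsupp : w.support.Nonempty := Finsupp.support_nonempty_iff.mpr hw0
  set n := w.support.max' hsupp with hn
  have hnmem : n ∈ w.support := w.support.max'_mem hsupp
  have hwn : w n ≠ 0 := Finsupp.mem_support_iff.mp hnmem
  set L : List ℕ := ((w.support.erase n).sort (· ≤ ·)).map (Nat.nth Nat.Prime) with hL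
  have hinj : Function.Injective (Nat.nth Nat.Prime) :=
    Nat.nth_injective Nat.infinite_setOf_prime
  have hLprime : ∀ q ∈ L, Nat.Prime q := by
    intro q hq
    rcases List.mem_map.mp hq with ⟨t, -, rfl⟩
    exact Nat.prime_nth_prime t
  have hLnd : L.Pairwise (· ≠ ·) :=
    (((w.support.erase n).sort_nodup (· ≤ ·)).map hinj : L.Nodup)
  obtain ⟨⟨hadd, hmul, hneg, hinv⟩, hnm⟩ := genSet_main L hLprime hLnd
  have hrest : (∑ t ∈ w.support.erase n,
      (w t : ℝ) * Real.sqrt (Nat.nth Nat.Prime t)) ∈ genSet L := by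
    refine Finset.sum_induction _ (· ∈ genSet L) (fun a b ha hb => hadd a ha b hb)
      (by simpa using genSet_rat_mem L 0) ?_
    intro t ht
    refine hmul _ (genSet_rat_mem L (w t)) _ (genSet_sqrt_mem ?_)
    rw [hL]
    exact List.mem_map_of_mem ((Finset.mem_sort _).mpr ht)
  have hsplit : (w n : ℝ) * Real.sqrt (Nat.nth Nat.Prime n) +
      (∑ t ∈ w.support.erase n, (w t : ℝ) * Real.sqrt (Nat.nth Nat.Prime t)) = 0 := by
    have hsum' : ∑ t ∈ w.support, (w t : ℝ) * Real.sqrt (Nat.nth Nat.Prime t) = 0 := hsum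
    rw [Finset.add_sum_erase w.support
      (fun t => (w t : ℝ) * Real.sqrt (Nat.nth Nat.Prime t)) hnmem]
    exact hsum'
  have hspn : Real.sqrt (Nat.nth Nat.Prime n) ∈ genSet L := by
    have hwn' : ((w n : ℚ) : ℝ) ≠ 0 := Rat.cast_ne_zero.mpr hwn
    have h1 : Real.sqrt (Nat.nth Nat.Prime n) =
        -(∑ t ∈ w.support.erase n, (w t : ℝ) * Real.sqrt (Nat.nth Nat.Prime t))
          * ((w n : ℝ))⁻¹ := by
      rw [eq_mul_inv_iff_mul_eq₀ hwn']
      linear_combination hsplit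
    rw [h1]
    have h2 : ((w n : ℝ))⁻¹ = (((w n)⁻¹ : ℚ) : ℝ) := by push_cast; ring
    rw [h2]
    exact hmul _ (hneg _ hrest) _ (genSet_rat_mem L _)
  refine hnm (Nat.nth Nat.Prime n) (Nat.prime_nth_prime n).prime.squarefree
    (Nat.prime_nth_prime n).one_lt.ne' (fun q hq hdvd => ?_) hspn
  rcases List.mem_map.mp hq with ⟨t, ht, rfl⟩
  have htn : t ≠ n := Finset.ne_of_mem_erase ((Finset.mem_sort _).mp ht)
  exact htn (hinj ((Nat.prime_dvd_prime_iff_eq (Nat.prime_nth_prime t)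
    (Nat.prime_nth_prime n)).mp hdvd))
end
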